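/- Let G be a nontrivial virtually cyclic group such that either (a) G is finite and isomorphic to ℤ/2, or (b) G is torsion-free, or (c) G is isomorphic to G₀ ⋊_θ ℤ/2 for some torsion-free group G₀ and homomorphism θ : ℤ/2 → Aut(G₀). Then G is isomorphic to one of the following four groups: ℤ/2, ℤ, ℤ × ℤ/2, or the infinite dihedral group ℤ ⋊ ℤ/2 (where the generator of ℤ/2 acts on ℤ by negation). -/

import Mathlib

/-- The automorphism of `ℤ` (written multiplicatively) given by negation. -/
def negAutZ : MulAut (Multiplicative ℤ) := MulEquiv.inv (Multiplicative ℤ)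

lemma negAutZ_sq : negAutZ ^ 2 = 1 := by
  ext z
  simp [negAutZ, pow_succ]

/-- The action of `ℤ/2` on `ℤ` in which the generator acts by negation. -/
def dihedralTwist : Multiplicative (ZMod 2) →* MulAut (Multiplicative ℤ) where
  toFun a := negAutZ ^ (Multiplicative.toAdd a).val
  map_one' := by
    show negAutZ ^ (Multiplicative.toAdd (1 : Multiplicative (ZMod 2))).val = 1
    simp
  map_mul' x y := by
    show negAutZ ^ (Multiplicative.toAdd x + Multiplicative.toAdd y).val = _
    rw [ZMod.val_add, ← pow_eq_pow_mod _ negAutZ_sq, pow_add]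

/-- The infinite dihedral group, as the semidirect product `ℤ ⋊ ℤ/2` where the
generator of `ℤ/2` acts on `ℤ` by negation. -/
abbrev InfiniteDihedral : Type := Multiplicative ℤ ⋊[dihedralTwist] Multiplicative (ZMod 2)

/-- A monoid is torsion-free if no element other than `1` has finite order
(the definition `Monoid.IsTorsionFree` of Mathlib (Dec 2024), since removed). -/
def Monoid.IsTorsionFree (G : Type*) [Monoid G] : Prop :=
  ∀ g : G, g ≠ 1 → ¬IsOfFinOrder g

/-- A witness that `G` is isomorphic to a semidirect product `G₀ ⋊ ℤ/2` with `G₀`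
torsion-free. -/
structure TorsionFreeByZTwoWitness (G : Type) [Group G] where
  G₀ : Type
  [grp : Group G₀]
  θ : Multiplicative (ZMod 2) →* MulAut G₀
  torsionFree : Monoid.IsTorsionFree G₀
  iso : G ≃* (G₀ ⋊[θ] Multiplicative (ZMod 2))

section Aux

open Subgroup

variable {X Y : Type*} [Group X] [Group Y]

lemma auxCyclic (f : X →* Y) (hf : Function.Injective f) [IsCyclic Y] : IsCyclic X :=
  isCyclic_of_surjective (MonoidHom.ofInjective hf).symm
    (MonoidHom.ofInjective hf).symm.surjective

lemma auxTF (f : X →* Y) (hf : Function.Injective f) (h : Monoid.IsTorsionFree Y) :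
    Monoid.IsTorsionFree X := by
  intro g hg hfin
  exact h (f g) (fun e => hg (hf (by rw [e, map_one]))) (f.isOfFinOrder hfin)

lemma mulAut_int_eq (e : MulAut (Multiplicative ℤ)) : e = 1 ∨ e = negAutZ := by
  set a : ℤ := Multiplicative.toAdd (e (Multiplicative.ofAdd 1)) with ha
  have hea : e (Multiplicative.ofAdd 1) = Multiplicative.ofAdd a := by
    rw [ha]; simp
  have key : ∀ n : ℤ, e (Multiplicative.ofAdd n) = Multiplicative.ofAdd (n * a) := by
    intro n
    calc e (Multiplicative.ofAdd n) = e ((Multiplicative.ofAdd (1 : ℤ)) ^ n) := by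
          rw [← ofAdd_zsmul]; norm_num
      _ = (e (Multiplicative.ofAdd 1)) ^ n := map_zpow _ _ _
      _ = (Multiplicative.ofAdd a) ^ n := by rw [hea]
      _ = Multiplicative.ofAdd (n * a) := by rw [← ofAdd_zsmul, smul_eq_mul]
  have haunit : a = 1 ∨ a = -1 := by
    obtain ⟨x, hx⟩ := e.surjective (Multiplicative.ofAdd 1)
    have hx' : e (Multiplicative.ofAdd (Multiplicative.toAdd x)) = Multiplicative.ofAdd 1 := by
      simpa using hx
    rw [key] at hx'
    have h1 : a * Multiplicative.toAdd x = 1 := by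
      simpa using congrArg Multiplicative.toAdd hx'
    exact Int.eq_one_or_neg_one_of_mul_eq_one h1
  rcases haunit with h1 | h1
  · left
    ext x
    have := key (Multiplicative.toAdd x)
    rw [h1, mul_one] at this
    simpa using this
  · right
    ext x
    have := key (Multiplicative.toAdd x)
    rw [h1] at this
    have h2 : e x = x⁻¹ := by
      simpa [mul_neg_one, ofAdd_neg] using this
    simp [negAutZ, h2]

lemma mulAut_int_sq (u : MulAut (Multiplicative ℤ)) : u * u = 1 := by
  rcases mulAut_int_eq u with h | h <;> rw [h]
  · rw [mul_one]
  · rw [← pow_two]; exact negAutZ_sq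

lemma cyclic_tf_equiv_int (X : Type*) [Group X] [IsCyclic X] [Nontrivial X]
    (htf : Monoid.IsTorsionFree X) : Nonempty (X ≃* Multiplicative ℤ) := by
  obtain ⟨g, hg⟩ := IsCyclic.exists_generator (α := X)
  have hg1 : g ≠ 1 := by
    rintro rfl
    obtain ⟨x, y, hxy⟩ := exists_pair_ne X
    apply hxy
    obtain ⟨m, hm⟩ := Subgroup.mem_zpowers_iff.mp (hg x)
    obtain ⟨n, hn⟩ := Subgroup.mem_zpowers_iff.mp (hg y)
    rw [← hm, ← hn]; simp
  have hord : ¬ IsOfFinOrder g := htf g hg1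
  have hzinj : Function.Injective (fun n : ℤ => g ^ n) :=
    injective_zpow_iff_not_isOfFinOrder.mpr hord
  have hinj : Function.Injective (zpowersHom X g) := by
    intro x y hxy
    have : g ^ (Multiplicative.toAdd x) = g ^ (Multiplicative.toAdd y) := by
      simpa [zpowersHom_apply] using hxy
    have := hzinj this
    simpa using congrArg Multiplicative.ofAdd this
  have hsurj : Function.Surjective (zpowersHom X g) := by
    intro x
    obtain ⟨n, hn⟩ := Subgroup.mem_zpowers_iff.mp (hg x)
    exact ⟨Multiplicative.ofAdd n, by simpa [zpowersHom_apply] using hn⟩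
  exact ⟨(MulEquiv.ofBijective (zpowersHom X g) ⟨hinj, hsurj⟩).symm⟩

lemma pow_ne_one_of_tf (htf : Monoid.IsTorsionFree X) {g : X} (hg : g ≠ 1)
    {n : ℕ} (hn : n ≠ 0) : g ^ n ≠ 1 := by
  intro h
  exact htf g hg (isOfFinOrder_iff_pow_eq_one.mpr ⟨n, Nat.pos_of_ne_zero hn, h⟩)

lemma isCyclic_of_tf_vc (X : Type*) [Group X] (htf : Monoid.IsTorsionFree X)
    (H : Subgroup X) (hc : IsCyclic H) (hfi : H.FiniteIndex) : IsCyclic X := by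
  haveI := hc; haveI := hfi
  cases finite_or_infinite X with
  | inl hfin =>
      haveI : Subsingleton X := by
        constructor
        intro a b
        have ha : a = 1 := by
          by_contra h; exact htf a h (isOfFinOrder_of_finite a)
        have hb : b = 1 := by
          by_contra h; exact htf b h (isOfFinOrder_of_finite b)
        rw [ha, hb]
      infer_instance
  | inr hinf =>
      set N := H.normalCore with hNdef
      haveI : N.Normal := H.normalCore_normal
      haveI hNfi : N.FiniteIndex := H.finiteIndex_normalCore
      haveI hNc : IsCyclic N := Subgroup.isCyclic_of_le H.normalCore_le
      haveI hNinf : Infinite N := by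
        have h1 := N.card_mul_index
        have h2 : Nat.card X = 0 := Nat.card_eq_zero_of_infinite
        rw [h2] at h1
        have h3 : Nat.card N = 0 := by
          rcases Nat.mul_eq_zero.mp h1 with h | h
          · exact h
          · exact absurd h hNfi.index_ne_zero
        rcases Nat.card_eq_zero.mp h3 with h | h
        · exact (h.false (1 : N)).elim
        · exact h
      have htfN : Monoid.IsTorsionFree N := auxTF N.subtype N.subtype_injective htf
      obtain ⟨eN⟩ := cyclic_tf_equiv_int N htfN
      haveI : Finite (MulAut (Multiplicative ℤ)) := by
        apply Finite.of_surjective (fun b : Bool => if b then (1 : MulAut (Multiplicative ℤ)) else negAutZ)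
        intro u
        rcases mulAut_int_eq u with h | h
        · exact ⟨true, h.symm⟩
        · exact ⟨false, h.symm⟩
      haveI : Finite (MulAut N) := Finite.of_equiv _ (MulAut.congr eN).symm.toEquiv
      set φ : X →* MulAut N := MulAut.conjNormal with hφ
      set C := φ.ker with hCdef
      haveI hCfi : C.FiniteIndex := Subgroup.finiteIndex_ker φ
      -- elements of the kernel commute with N
      have hcomm : ∀ c ∈ C, ∀ n ∈ N, c * n = n * c := by
        intro c hc n hn
        have h1 : φ c = 1 := hc
        have h2 : φ c ⟨n, hn⟩ = ⟨n, hn⟩ := by rw [h1]; rfl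
        have h3 : c * n * c⁻¹ = n := by
          have := congrArg Subtype.val h2
          rwa [MulAut.conjNormal_apply] at this
        calc c * n = (c * n * c⁻¹) * c := by group
          _ = n * c := by rw [h3]
      -- conversely, commuting with N pointwise puts you in the kernel
      have hker_of_comm : ∀ t : X, (∀ n ∈ N, t * n = n * t) → t ∈ C := by
        intro t ht
        show φ t = 1
        ext x
        show ((φ t x : N) : X) = ((x : N) : X)
        rw [MulAut.conjNormal_apply]
        calc t * (x : X) * t⁻¹ = ((x : X) * t) * t⁻¹ := by rw [ht x x.2]
          _ = (x : X) := by group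
      have hNleC : N ≤ C := by
        intro n hn
        apply hker_of_comm
        intro m hm
        letI : CommGroup N := IsCyclic.commGroup
        have := congrArg Subtype.val (mul_comm (⟨n, hn⟩ : N) ⟨m, hm⟩)
        simpa using this
      -- torsion-freeness of C
      have htfC : Monoid.IsTorsionFree C := auxTF C.subtype C.subtype_injective htf
      -- N inside C is central
      have hNsub : N.subgroupOf C ≤ Subgroup.center C := by
        intro x hx
        rw [Subgroup.mem_center_iff]
        intro y
        ext
        exact hcomm y y.2 x (Subgroup.mem_subgroupOf.mp hx)
      haveI : (N.subgroupOf C).FiniteIndex := Subgroup.instFiniteIndex_subgroupOf N C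
      haveI : (Subgroup.center C).FiniteIndex := Subgroup.finiteIndex_of_le hNsub
      -- the transfer homomorphism shows C is commutative
      have hτinj : Function.Injective (MonoidHom.transferCenterPow C) := by
        rw [injective_iff_map_eq_one]
        intro a ha
        have h1 : a ^ (Subgroup.center C).index = 1 := by
          have := congrArg Subtype.val ha
          rwa [MonoidHom.transferCenterPow_apply] at this
        by_contra hne
        exact pow_ne_one_of_tf htfC hne FiniteIndex.index_ne_zero h1
      have hCcomm : ∀ a b : C, a * b = b * a := by
        intro a b
        apply hτinj
        rw [map_mul, map_mul]
        apply Subtype.ext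
        exact Subgroup.mem_center_iff.mp ((MonoidHom.transferCenterPow C) b).2 _
      -- C is cyclic: it embeds into the cyclic group N.subgroupOf C by the index power map
      haveI hNC' : IsCyclic (N.subgroupOf C) :=
        isCyclic_of_surjective (Subgroup.subgroupOfEquivOfLe hNleC).symm
          (Subgroup.subgroupOfEquivOfLe hNleC).symm.surjective
      haveI : (N.subgroupOf C).Normal := by
        constructor
        intro n hn g
        have : g * n * g⁻¹ = n := by rw [hCcomm g n]; group
        rwa [this]
      have hmne : (N.subgroupOf C).index ≠ 0 := FiniteIndex.index_ne_zero
      set m := (N.subgroupOf C).index with hm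
      let ψ : C →* N.subgroupOf C :=
        { toFun := fun c => ⟨c ^ m, Subgroup.pow_index_mem _ c⟩
          map_one' := by ext; simp
          map_mul' := by
            intro a b
            ext
            exact congrArg Subtype.val (Commute.mul_pow (hCcomm a b) m) }
      have hψinj : Function.Injective ψ := by
        rw [injective_iff_map_eq_one]
        intro a ha
        have h1 : a ^ m = 1 := congrArg Subtype.val ha
        by_contra hne
        exact pow_ne_one_of_tf htfC hne hmne h1
      haveI hCcyc : IsCyclic C := auxCyclic ψ hψinj
      haveI : Infinite C :=
        Infinite.of_injective (Subgroup.inclusion hNleC) (Subgroup.inclusion_injective hNleC)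
      obtain ⟨eC⟩ := cyclic_tf_equiv_int C htfC
      haveI : C.Normal := φ.normal_ker
      -- C is all of X
      have hCtop : C = ⊤ := by
        rw [Subgroup.eq_top_iff']
        intro t
        by_contra ht
        have ht2 : t * t ∈ C := by
          show φ (t * t) = 1
          rw [map_mul]
          have h := mulAut_int_sq (MulAut.congr eN (φ t))
          rw [← map_mul, ← map_one (MulAut.congr eN)] at h
          exact (MulAut.congr eN).injective h
        set ψt : MulAut C := MulAut.conjNormal t with hψt
        rcases mulAut_int_eq (MulAut.congr eC ψt) with hcase | hcase
        · -- conjugation by t is trivial on C, hence on N, so t ∈ C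
          have h1 : ψt = 1 := by
            apply (MulAut.congr eC).injective
            rw [hcase, map_one]
          apply ht
          apply hker_of_comm
          intro n hn
          have h2 : ψt ⟨n, hNleC hn⟩ = ⟨n, hNleC hn⟩ := by rw [h1]; rfl
          have h3 : t * n * t⁻¹ = n := by
            have := Subtype.ext_iff.mp h2
            rwa [hψt, MulAut.conjNormal_apply] at this
          calc t * n = (t * n * t⁻¹) * t := by group
            _ = n * t := by rw [h3]
        · -- conjugation by t inverts C; applied to t² this forces t⁴ = 1
          have hinv : ∀ x : C, ψt x = x⁻¹ := by
            intro x
            apply eC.injective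
            have h5 : (MulAut.congr eC ψt) (eC x) = negAutZ (eC x) := by rw [hcase]
            have h6 : (MulAut.congr eC ψt) (eC x) = eC (ψt x) := by
              simp [MulAut.congr]
            rw [h6] at h5
            rw [h5]
            simp [negAutZ]
          have h4 := hinv ⟨t * t, ht2⟩
          have h6 : t * t = (t * t)⁻¹ := by
            have h5 := Subtype.ext_iff.mp h4
            rw [hψt, MulAut.conjNormal_apply] at h5
            have h7 : t * (t * t) * t⁻¹ = t * t := by group
            rw [h7] at h5
            simpa using h5
          have h8 : (t * t) ^ (2 : ℕ) = 1 := by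
            rw [pow_two]
            nth_rewrite 1 [h6]
            group
          have htt : t * t = 1 := by
            by_contra hne
            exact pow_ne_one_of_tf htf hne two_ne_zero h8
          have ht1 : t = 1 := by
            by_contra hne
            exact pow_ne_one_of_tf htf hne two_ne_zero (by rwa [pow_two])
          exact ht (ht1 ▸ C.one_mem)
      have : IsCyclic (⊤ : Subgroup X) := hCtop ▸ hCcyc
      exact isCyclic_of_surjective (Subgroup.topEquiv (G := X)) Subgroup.topEquiv.surjective

/-- Congruence of semidirect products along an isomorphism of the normal factor. -/
def sdCongr {N N' H : Type*} [Group N] [Group N'] [Group H] (e : N ≃* N')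
    (θ : H →* MulAut N) :
    (N ⋊[θ] H) ≃* (N' ⋊[(MulAut.congr e).toMonoidHom.comp θ] H) where
  toFun x := ⟨e x.left, x.right⟩
  invFun y := ⟨e.symm y.left, y.right⟩
  left_inv x := by ext <;> simp
  right_inv y := by ext <;> simp
  map_mul' x y := by
    ext
    · show e ((x * y).left) = _
      rw [SemidirectProduct.mul_left, map_mul]
      show _ = e x.left * (MulAut.congr e (θ x.right)) (e y.left)
      congr 1
      simp [MulAut.congr]
    · rfl

/-- A semidirect product with trivial action is the direct product. -/
def sdTrivial (N H : Type*) [Group N] [Group H] :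
    (N ⋊[(1 : H →* MulAut N)] H) ≃* N × H where
  toFun x := (x.left, x.right)
  invFun p := ⟨p.1, p.2⟩
  left_inv x := rfl
  right_inv p := rfl
  map_mul' x y := by
    ext
    · show (x * y).left = x.left * y.left
      rw [SemidirectProduct.mul_left]
      rfl
    · rfl

lemma zmod2_cases (a : Multiplicative (ZMod 2)) :
    a = 1 ∨ a = Multiplicative.ofAdd 1 := by
  revert a; decide

end Aux

/-- a nontrivial virtually cyclic group which is (a) finite and isomorphic
to `ℤ/2`, or (b) torsion-free, or (c) isomorphic to `G₀ ⋊ ℤ/2` with `G₀` torsion-free,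
is isomorphic to one of: `ℤ/2`, `ℤ`, `ℤ × ℤ/2`, or the infinite dihedral group. -/
theorem stmt_6 (G : Type) [Group G] [Nontrivial G]
    (hvc : ∃ H : Subgroup G, IsCyclic H ∧ H.FiniteIndex)
    (h : (Finite G ∧ Nonempty (G ≃* Multiplicative (ZMod 2))) ∨
         Monoid.IsTorsionFree G ∨
         Nonempty (TorsionFreeByZTwoWitness G)) :
    Nonempty (G ≃* Multiplicative (ZMod 2)) ∨
      Nonempty (G ≃* Multiplicative ℤ) ∨
      Nonempty (G ≃* Multiplicative ℤ × Multiplicative (ZMod 2)) ∨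
      Nonempty (G ≃* InfiniteDihedral) := by
  rcases h with ⟨_, hiso⟩ | htf | ⟨w⟩
  · exact Or.inl hiso
  · -- torsion-free case
    obtain ⟨H, hc, hfi⟩ := hvc
    haveI : IsCyclic G := isCyclic_of_tf_vc G htf H hc hfi
    exact Or.inr (Or.inl (cyclic_tf_equiv_int G htf))
  · obtain ⟨G₀, θ, htf₀, iso⟩ := w
    let f : G₀ →* G := (MulEquiv.toMonoidHom iso.symm).comp SemidirectProduct.inl
    have hfinj : Function.Injective f := by
      intro a b hab
      exact SemidirectProduct.inl_injective (iso.symm.injective hab)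
    set K := f.range with hKdef
    let eK : G₀ ≃* K := MonoidHom.ofInjective hfinj
    have htfK : Monoid.IsTorsionFree K := auxTF eK.symm.toMonoidHom eK.symm.injective htf₀
    haveI : Finite (SemidirectProduct.rightHom
        (φ := θ) : _ →* Multiplicative (ZMod 2)).range := by
      infer_instance
    haveI hKfi : K.FiniteIndex := by
      have h1 : K = Subgroup.comap iso.toMonoidHom SemidirectProduct.inl.range := by
        rw [hKdef]
        show (MonoidHom.comp _ _).range = _
        rw [MonoidHom.range_comp, Subgroup.map_equiv_eq_comap_symm' iso.symm, MulEquiv.symm_symm]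
      constructor
      rw [h1, Subgroup.index_comap_of_surjective _ iso.surjective,
        SemidirectProduct.range_inl_eq_ker_rightHom]
      exact Subgroup.FiniteIndex.index_ne_zero
    obtain ⟨H, hHc, hHfi⟩ := hvc
    haveI := hHc; haveI := hHfi
    haveI hinfK : IsCyclic ↥(H ⊓ K) := Subgroup.isCyclic_of_le inf_le_left
    haveI hsc : IsCyclic (H.subgroupOf K) := by
      rw [← Subgroup.inf_subgroupOf_right]
      exact isCyclic_of_surjective (Subgroup.subgroupOfEquivOfLe inf_le_right).symm
        (Subgroup.subgroupOfEquivOfLe inf_le_right).symm.surjective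
    haveI hKcyc : IsCyclic K :=
      isCyclic_of_tf_vc K htfK (H.subgroupOf K) inferInstance inferInstance
    haveI : IsCyclic G₀ := isCyclic_of_surjective eK.symm eK.symm.surjective
    rcases subsingleton_or_nontrivial G₀ with hss | hnt
    · -- G ≅ ℤ/2
      left
      have hq : Function.Injective
          (SemidirectProduct.rightHom (φ := θ) : _ →* Multiplicative (ZMod 2)) := by
        intro x y hxy
        ext
        · exact Subsingleton.elim _ _
        · exact hxy
      exact ⟨iso.trans (MulEquiv.ofBijective _ ⟨hq, SemidirectProduct.rightHom_surjective⟩)⟩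
    · obtain ⟨e₀⟩ := cyclic_tf_equiv_int G₀ htf₀
      set θ' := (MulAut.congr e₀).toMonoidHom.comp θ with hθ'def
      have iso2 : G ≃* (Multiplicative ℤ ⋊[θ'] Multiplicative (ZMod 2)) :=
        iso.trans (sdCongr e₀ θ)
      rcases mulAut_int_eq (θ' (Multiplicative.ofAdd 1)) with hu | hu
      · have hθ' : θ' = 1 := by
          refine MonoidHom.ext fun a => ?_
          rcases zmod2_cases a with rfl | rfl
          · simp
          · rw [hu]; rfl
        right; right; left
        refine ⟨iso2.trans ?_⟩
        rw [hθ']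
        exact sdTrivial _ _
      · have hθ' : θ' = dihedralTwist := by
          refine MonoidHom.ext fun a => ?_
          rcases zmod2_cases a with rfl | rfl
          · simp
          · rw [hu]
            show negAutZ = negAutZ ^ (Multiplicative.toAdd (Multiplicative.ofAdd (1 : ZMod 2))).val
            rw [toAdd_ofAdd, ZMod.val_one, pow_one]
        right; right; right
        refine ⟨iso2.trans ?_⟩
        rw [hθ']
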